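/- Let {φ_{n,k}}_{n≥0} for k = 1,...,N be N families of one-variable orthonormal polynomials satisfying x φ_{n,k}(x) = a_{n+1,k}φ_{n+1,k}(x) + b_{n,k}φ_{n,k}(x) + a_{n,k}φ_{n-1,k}(x) with a_{n,k} > 0. Define for each nonempty word σ = i_1^{k_1}...i_p^{k_p} (reduced form) the noncommutative polynomial φ_σ(X_1,...,X_N) = φ_{k_1,i_1}(X_{i_1})···φ_{k_p,i_p}(X_{i_p}), and φ_∅ = 1. Then there exist matrices A_{n,k} (N^n × N^{n-1}) and B_{n,k} (N^n × N^n, self-adjoint) forming an admissible family such that X_k Φ_n = Φ_{n+1}A_{n+1,k} + Φ_n B_{n,k} + Φ_{n-1}A*_{n,k} for all k and n ≥ 0, where Φ_n = [φ_σ]_{|σ|=n} (row indexed by words of length n in lexicographic order) and Φ_{-1} = 0. -/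

import Mathlib

open scoped ComplexOrder

/-- The underlying vector space `l²`-span: finitely supported functions on `F_N^+`. -/
abbrev W (N : ℕ) := List (Fin N) →₀ ℂ

/-- The standard basis vector `e_σ`. -/
noncomputable def eb {N : ℕ} (σ : List (Fin N)) : W N := Finsupp.single σ 1

/-- The (finite) set of words of length `n` over `{1,…,N}`. -/
def Words (N n : ℕ) : Finset (List (Fin N)) :=
  Finset.image (fun f : Fin n → Fin N => List.ofFn f) Finset.univ

/-- The adjoint block `A*_{n,k}`, defined entrywise from `A_{n,k}`:
`(A*_{n,k})_{α,β} = conj (A_{n,k})_{β,α}` for `|α| = n-1`, `|β| = n`. -/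
noncomputable def astar {N : ℕ} (A : ℕ → Fin N → Module.End ℂ (W N)) (n : ℕ)
    (k : Fin N) : Module.End ℂ (W N) :=
  Finsupp.lift (W N) ℂ (List (Fin N))
    (fun β => ∑ α ∈ Words N (n - 1), (starRingEnd ℂ) ((A n k (eb α)) β) • eb α)

/-- Partial sum of the first `m` steps. -/
def psum {L : ℕ} (f : Fin L → ℤ) (m : ℕ) : ℤ :=
  ∑ i : Fin L, if (i : ℕ) < m then f i else 0

open Classical in
/-- Motzkin-type paths of length `L` from height `j` to height `k`: step sequences
with values in `{-1,0,1}` (fall, level, rise) staying at nonnegative heights. -/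
noncomputable def pathsSet (L j k : ℕ) : Finset (Fin L → ℤ) :=
  (Fintype.piFinset fun _ => ({-1, 0, 1} : Finset ℤ)).filter
    (fun f => (∀ m ∈ Finset.range (L + 1), 0 ≤ (j : ℤ) + psum f m) ∧
      (j : ℤ) + psum f L = k)

/-- The weight of a single step of color `c` and increment `s`, taken at height `h`:
`A_{h+1,c}` for a rise, `B_{h,c}` for a level step, `A*_{h,c}` for a fall
(color-change steps have weight `I` and are omitted). -/
noncomputable def stepWeight {N : ℕ} (A B : ℕ → Fin N → Module.End ℂ (W N))
    (c : Fin N) (h s : ℤ) : Module.End ℂ (W N) :=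
  if s = 1 then A (h.toNat + 1) c else if s = 0 then B h.toNat c else astar A h.toNat c

/-- The weight `w(p)` of a path `p ∈ M_σ` starting at height `j`: the product of the
step weights in reverse order; the color of the `n`-th step is the `n`-th letter of
the reversed word `I(σ)`. -/
noncomputable def pathWeight {N : ℕ} (A B : ℕ → Fin N → Module.End ℂ (W N))
    (σ : List (Fin N)) (j : ℕ) (f : Fin σ.length → ℤ) : Module.End ℂ (W N) :=
  ((List.ofFn fun n : Fin σ.length =>
      stepWeight A B (σ.reverse.get (Fin.cast (@List.length_reverse _ σ).symm n))
        ((j : ℤ) + psum f n) (f n)).reverse).prod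

/-- The Jacobi operator `J_k` on the span of the basis `{e_σ}`, with diagonal blocks
`B_{n,k}` and off-diagonal blocks `A_{n,k}`, `A*_{n,k}`. -/
noncomputable def Jop {N : ℕ} (A B : ℕ → Fin N → Module.End ℂ (W N)) (k : Fin N) :
    Module.End ℂ (W N) :=
  Finsupp.lift (W N) ℂ (List (Fin N))
    (fun τ => A (τ.length + 1) k (eb τ) + B τ.length k (eb τ)
      + astar A τ.length k (eb τ))

/-- `J_σ = J_{j_1} ⋯ J_{j_l}` for a word `σ = j_1 … j_l`. -/
noncomputable def Jword {N : ℕ} (A B : ℕ → Fin N → Module.End ℂ (W N))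
    (σ : List (Fin N)) : Module.End ℂ (W N) :=
  (σ.map (Jop A B)).prod

/-- The free product `φ_σ = φ_{k_1,i_1}(X_{i_1}) ⋯ φ_{k_p,i_p}(X_{i_p})` of `N`
families of one-variable polynomials, for `σ = i_1^{k_1} ⋯ i_p^{k_p}` in reduced
form (`φ_∅ = 1`). -/
noncomputable def phiWord {N : ℕ} (p : ℕ → Fin N → Polynomial ℂ) :
    List (Fin N) → FreeAlgebra ℂ (Fin N)
  | [] => 1
  | a :: t =>
    Polynomial.aeval (FreeAlgebra.ι ℂ a) (p ((t.takeWhile (· = a)).length + 1) a)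
      * phiWord p (t.drop (t.takeWhile (· = a)).length)
  termination_by σ => σ.length
  decreasing_by simp only [List.length_drop, List.length_cons]; omega

/-- The combined matrix `A_{n+1} = [A_{n+1,1} … A_{n+1,N}]` of a family of blocks,
with rows and columns indexed by words of length `n+1` (a column `c = k·β` picks the
column `β` of `A_{n+1,k}`). -/
noncomputable def AcombE {N : ℕ} (A : ℕ → Fin N → Module.End ℂ (W N)) (n : ℕ) :
    Matrix (Fin (n + 1) → Fin N) (Fin (n + 1) → Fin N) ℂ :=
  fun r c => (A (n + 1) (c 0) (eb (List.ofFn fun i => c i.succ))) (List.ofFn r)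

/-! ### Auxiliary lemmas -/

lemma mem_Words {N n : ℕ} (σ : List (Fin N)) : σ ∈ Words N n ↔ σ.length = n := by
  constructor
  · rintro h
    simp only [Words, Finset.mem_image] at h
    obtain ⟨f, -, rfl⟩ := h
    simp
  · rintro rfl
    simp only [Words, Finset.mem_image]
    exact ⟨σ.get, Finset.mem_univ _, List.ofFn_get σ⟩

lemma lift_eb {N : ℕ} (f : List (Fin N) → W N) (σ : List (Fin N)) :
    Finsupp.lift (W N) ℂ (List (Fin N)) f (eb σ) = f σ := by
  simp [eb, Finsupp.lift_apply]

lemma eb_apply {N : ℕ} (σ α : List (Fin N)) : eb σ α = if σ = α then 1 else 0 := by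
  simp [eb, Finsupp.single_apply]

lemma smul_eb_apply {N : ℕ} (c : ℂ) (σ α : List (Fin N)) :
    ((c • eb σ) α) = if σ = α then c else 0 := by
  rw [Finsupp.smul_apply, eb_apply]
  split <;> simp

lemma smul_eb_apply_smul {N : ℕ} (c : ℂ) (σ α : List (Fin N)) (x : FreeAlgebra ℂ (Fin N)) :
    ((c • eb σ) α) • x = if σ = α then c • x else 0 := by
  rw [smul_eb_apply]
  split <;> simp

lemma sum_single_smul {N n : ℕ} (c : ℂ) (σ : List (Fin N)) (hσ : σ.length = n)
    (g : List (Fin N) → FreeAlgebra ℂ (Fin N)) :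
    ∑ α ∈ Words N n, ((c • eb σ) α) • g α = c • g σ := by
  rw [Finset.sum_congr rfl fun α _ => smul_eb_apply_smul c σ α (g α), Finset.sum_ite_eq,
    if_pos ((mem_Words σ).2 hσ)]

lemma phiWord_cons {N : ℕ} (p : ℕ → Fin N → Polynomial ℂ) (a : Fin N) (t : List (Fin N)) :
    phiWord p (a :: t) =
    Polynomial.aeval (FreeAlgebra.ι ℂ a) (p ((t.takeWhile (· = a)).length + 1) a)
      * phiWord p (t.drop (t.takeWhile (· = a)).length) := by
  rw [phiWord]

lemma takeWhile_cons_self {N : ℕ} (k : Fin N) (t : List (Fin N)) :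
    (k :: t).takeWhile (· = k) = k :: t.takeWhile (· = k) := by
  simp [List.takeWhile_cons]

lemma takeWhile_cons_ne {N : ℕ} (k a : Fin N) (t : List (Fin N)) (h : a ≠ k) :
    (a :: t).takeWhile (· = k) = [] := by
  simp [List.takeWhile_cons, h]

lemma phi_decomp {N : ℕ} (p : ℕ → Fin N → Polynomial ℂ) (hp0 : ∀ k, p 0 k = 1) (k : Fin N)
    (τ : List (Fin N)) :
    phiWord p τ = Polynomial.aeval (FreeAlgebra.ι ℂ k) (p ((τ.takeWhile (· = k)).length) k)
      * phiWord p (τ.drop (τ.takeWhile (· = k)).length) := by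
  match τ with
  | [] => simp [hp0, phiWord]
  | a :: t =>
    by_cases h : a = k
    · subst h
      rw [takeWhile_cons_self, phiWord_cons]
      simp
    · rw [takeWhile_cons_ne k a t h]
      simp [hp0]

/-- The explicit block `A_{n,k}`. -/
noncomputable def Aop {N : ℕ} (a : ℕ → Fin N → ℝ) (n : ℕ) (k : Fin N) :
    Module.End ℂ (W N) :=
  Finsupp.lift (W N) ℂ (List (Fin N)) (fun β =>
    if β.length + 1 = n then ((a ((β.takeWhile (· = k)).length + 1) k : ℝ) : ℂ) • eb (k :: β)
    else 0)

/-- The explicit block `B_{n,k}`. -/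
noncomputable def Bop {N : ℕ} (b : ℕ → Fin N → ℝ) (n : ℕ) (k : Fin N) :
    Module.End ℂ (W N) :=
  Finsupp.lift (W N) ℂ (List (Fin N)) (fun β =>
    if β.length = n then ((b ((β.takeWhile (· = k)).length) k : ℝ) : ℂ) • eb β else 0)

lemma Aop_eb {N : ℕ} (a : ℕ → Fin N → ℝ) (n : ℕ) (k : Fin N) (β : List (Fin N)) :
    Aop a n k (eb β) =
      if β.length + 1 = n then ((a ((β.takeWhile (· = k)).length + 1) k : ℝ) : ℂ) • eb (k :: β)
      else 0 :=
  lift_eb _ _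

lemma Bop_eb {N : ℕ} (b : ℕ → Fin N → ℝ) (n : ℕ) (k : Fin N) (β : List (Fin N)) :
    Bop b n k (eb β) =
      if β.length = n then ((b ((β.takeWhile (· = k)).length) k : ℝ) : ℂ) • eb β else 0 :=
  lift_eb _ _

lemma astar_Aop_eb {N : ℕ} (a : ℕ → Fin N → ℝ) (k : Fin N) (n : ℕ) (τ : List (Fin N)) :
    astar (Aop a) n k (eb τ)
      = ∑ α ∈ Words N (n - 1), (starRingEnd ℂ) ((Aop a n k (eb α)) τ) • eb α :=
  lift_eb _ _

lemma astar_Aop_zero {N : ℕ} (a : ℕ → Fin N → ℝ) (k : Fin N) (n : ℕ) (τ : List (Fin N))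
    (h : ∀ t, τ ≠ k :: t) : astar (Aop a) n k (eb τ) = 0 := by
  rw [astar_Aop_eb]
  refine Finset.sum_eq_zero fun α _ => ?_
  rw [Aop_eb]
  split
  · rw [smul_eb_apply, if_neg fun hc => h α hc.symm]
    simp
  · simp

lemma astar_Aop_cons {N : ℕ} (a : ℕ → Fin N → ℝ) (k : Fin N) (t : List (Fin N)) :
    astar (Aop a) (t.length + 1) k (eb (k :: t))
      = ((a ((t.takeWhile (· = k)).length + 1) k : ℝ) : ℂ) • eb t := by
  rw [astar_Aop_eb]
  have hcollapse : ∀ α ∈ Words N (t.length + 1 - 1),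
      (starRingEnd ℂ) ((Aop a (t.length + 1) k (eb α)) (k :: t)) • eb α
        = if α = t then ((a ((t.takeWhile (· = k)).length + 1) k : ℝ) : ℂ) • eb α else 0 := by
    intro α hα
    have hlen : α.length = t.length := by simpa using (mem_Words α).1 hα
    rw [Aop_eb, if_pos (by omega), smul_eb_apply]
    by_cases hat : α = t
    · subst hat
      rw [if_pos rfl, if_pos rfl, Complex.conj_ofReal]
    · rw [if_neg (by simp [hat]), if_neg hat, map_zero, zero_smul]
  rw [Finset.sum_congr rfl hcollapse, Finset.sum_ite_eq',
    if_pos ((mem_Words t).2 (by omega))]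


section MainAux

variable {N : ℕ} (a b : ℕ → Fin N → ℝ) (p : ℕ → Fin N → Polynomial ℂ)

lemma recur_nostart (hp0 : ∀ k, p 0 k = 1)
    (hrec0 : ∀ k, Polynomial.X * p 0 k = (a 1 k : ℂ) • p 1 k + (b 0 k : ℂ) • p 0 k)
    (k : Fin N) (τ : List (Fin N)) (hm : τ.takeWhile (· = k) = []) :
    FreeAlgebra.ι ℂ k * phiWord p τ
      = (∑ α ∈ Words N (τ.length + 1),
          ((Aop a (τ.length + 1) k (eb τ)) α) • phiWord p α)
        + (∑ α ∈ Words N τ.length,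
          ((Bop b τ.length k (eb τ)) α) • phiWord p α)
        + (∑ α ∈ Words N (τ.length - 1),
          ((astar (Aop a) τ.length k (eb τ)) α) • phiWord p α) := by
  have hnc : ∀ t, τ ≠ k :: t := by
    intro t ht
    rw [ht, takeWhile_cons_self] at hm
    exact List.cons_ne_nil _ _ hm
  rw [Aop_eb, if_pos rfl, Bop_eb, if_pos rfl, hm, astar_Aop_zero a k _ _ hnc]
  simp only [List.length_nil, Nat.zero_add, Finsupp.coe_zero, Pi.zero_apply, zero_smul,
    Finset.sum_const_zero, add_zero]
  rw [sum_single_smul _ _ (by simp), sum_single_smul _ _ rfl]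
  have h1 : phiWord p (k :: τ) = Polynomial.aeval (FreeAlgebra.ι ℂ k) (p 1 k) * phiWord p τ := by
    rw [phiWord_cons, hm]
    simp
  have h2 : Polynomial.aeval (FreeAlgebra.ι ℂ k) (p 0 k) = 1 := by
    rw [hp0]; exact map_one _
  have hX : FreeAlgebra.ι ℂ k * phiWord p τ
      = Polynomial.aeval (FreeAlgebra.ι ℂ k) (Polynomial.X * p 0 k) * phiWord p τ := by
    rw [map_mul, Polynomial.aeval_X, h2, mul_one]
  rw [hX, hrec0 k, map_add, map_smul, map_smul, add_mul, smul_mul_assoc, smul_mul_assoc,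
    h2, one_mul, ← h1]

lemma recur_start (hp0 : ∀ k, p 0 k = 1)
    (hrec : ∀ n k, Polynomial.X * p (n + 1) k
      = (a (n + 2) k : ℂ) • p (n + 2) k + (b (n + 1) k : ℂ) • p (n + 1) k
        + (a (n + 1) k : ℂ) • p n k)
    (k : Fin N) (t : List (Fin N)) :
    FreeAlgebra.ι ℂ k * phiWord p (k :: t)
      = (∑ α ∈ Words N ((k :: t).length + 1),
          ((Aop a ((k :: t).length + 1) k (eb (k :: t))) α) • phiWord p α)
        + (∑ α ∈ Words N (k :: t).length,
          ((Bop b (k :: t).length k (eb (k :: t))) α) • phiWord p α)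
        + (∑ α ∈ Words N ((k :: t).length - 1),
          ((astar (Aop a) (k :: t).length k (eb (k :: t))) α) • phiWord p α) := by
  set m' := (t.takeWhile (· = k)).length with hm'
  have h1 : phiWord p (k :: t)
      = Polynomial.aeval (FreeAlgebra.ι ℂ k) (p (m' + 1) k) * phiWord p (t.drop m') :=
    phiWord_cons p k t
  have h2 : phiWord p (k :: k :: t)
      = Polynomial.aeval (FreeAlgebra.ι ℂ k) (p (m' + 2) k) * phiWord p (t.drop m') := by
    rw [phiWord_cons p k (k :: t), takeWhile_cons_self, List.length_cons, List.drop_succ_cons]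
  have h3 : phiWord p t
      = Polynomial.aeval (FreeAlgebra.ι ℂ k) (p m' k) * phiWord p (t.drop m') :=
    phi_decomp p hp0 k t
  have hlen : ((k :: t).takeWhile (· = k)).length = m' + 1 := by
    rw [takeWhile_cons_self, List.length_cons]
  rw [Aop_eb, if_pos rfl, Bop_eb, if_pos rfl, hlen]
  have hastar : astar (Aop a) (k :: t).length k (eb (k :: t))
      = ((a (m' + 1) k : ℝ) : ℂ) • eb t := by
    rw [List.length_cons]
    exact astar_Aop_cons a k t
  rw [hastar, sum_single_smul _ _ (by simp), sum_single_smul _ _ rfl,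
    sum_single_smul _ _ (by simp)]
  have hX : FreeAlgebra.ι ℂ k * phiWord p (k :: t)
      = Polynomial.aeval (FreeAlgebra.ι ℂ k) (Polynomial.X * p (m' + 1) k)
        * phiWord p (t.drop m') := by
    rw [h1, ← mul_assoc, map_mul, Polynomial.aeval_X]
  rw [hX, hrec m' k, map_add, map_add, map_smul, map_smul, map_smul, add_mul, add_mul,
    smul_mul_assoc, smul_mul_assoc, smul_mul_assoc, ← h1, ← h2, ← h3]

end MainAux

/-- given `N` families of one-variable orthonormal polynomials
`φ_{n,k}` with three-term recurrences `x φ_{n,k} = a_{n+1,k} φ_{n+1,k} + b_{n,k} φ_{n,k}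
+ a_{n,k} φ_{n-1,k}` (`a_{n,k} > 0`, `b_{n,k}` real), the free-product polynomials
`φ_σ` satisfy a three-term recurrence `X_k Φ_n = Φ_{n+1} A_{n+1,k} + Φ_n B_{n,k}
+ Φ_{n-1} A*_{n,k}` for some admissible family of matrices: the blocks `A_{n,k}`
map level `n-1` to level `n`, the `B_{n,k}` are self-adjoint and level-preserving,
and each combined matrix `A_n` is invertible, upper triangular for the lexicographic
order on words, with strictly positive diagonal. -/
theorem free_product_three_term {N : ℕ}
    (a b : ℕ → Fin N → ℝ) (ha : ∀ n k, 0 < a (n + 1) k)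
    (p : ℕ → Fin N → Polynomial ℂ) (hp0 : ∀ k, p 0 k = 1)
    (hrec0 : ∀ k, Polynomial.X * p 0 k
      = (a 1 k : ℂ) • p 1 k + (b 0 k : ℂ) • p 0 k)
    (hrec : ∀ n k, Polynomial.X * p (n + 1) k
      = (a (n + 2) k : ℂ) • p (n + 2) k + (b (n + 1) k : ℂ) • p (n + 1) k
        + (a (n + 1) k : ℂ) • p n k) :
    ∃ A B : ℕ → Fin N → Module.End ℂ (W N),
      (∀ n k (β : List (Fin N)), β.length + 1 ≠ n → A n k (eb β) = 0) ∧
      (∀ n k (β α : List (Fin N)), (A n k (eb β)) α ≠ 0 → α.length = n) ∧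
      (∀ n k (β : List (Fin N)), β.length ≠ n → B n k (eb β) = 0) ∧
      (∀ n k (β α : List (Fin N)), (B n k (eb β)) α ≠ 0 → α.length = n) ∧
      (∀ n k (α β : List (Fin N)),
        (starRingEnd ℂ) ((B n k (eb β)) α) = (B n k (eb α)) β) ∧
      (∀ n : ℕ, IsUnit (AcombE A n) ∧
        (∀ r c : Fin (n + 1) → Fin N, r ≠ c → AcombE A n r c ≠ 0 →
          List.Lex (· < ·) (List.ofFn r) (List.ofFn c)) ∧
        (∀ r : Fin (n + 1) → Fin N, 0 < AcombE A n r r)) ∧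
      (∀ (k : Fin N) (τ : List (Fin N)),
        FreeAlgebra.ι ℂ k * phiWord p τ
          = (∑ α ∈ Words N (τ.length + 1),
              ((A (τ.length + 1) k (eb τ)) α) • phiWord p α)
            + (∑ α ∈ Words N τ.length,
              ((B τ.length k (eb τ)) α) • phiWord p α)
            + (∑ α ∈ Words N (τ.length - 1),
              ((astar A τ.length k (eb τ)) α) • phiWord p α)) := by
  classical
  refine ⟨Aop a, Bop b, ?_, ?_, ?_, ?_, ?_, ?_, ?_⟩
  · intro n k β h
    rw [Aop_eb, if_neg h]
  · intro n k β α h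
    rw [Aop_eb] at h
    split at h
    · rename_i hc
      rw [smul_eb_apply] at h
      split at h
      · rename_i he
        rw [← he]
        simpa using hc
      · exact absurd rfl h
    · simp at h
  · intro n k β h
    rw [Bop_eb, if_neg h]
  · intro n k β α h
    rw [Bop_eb] at h
    split at h
    · rename_i hc
      rw [smul_eb_apply] at h
      split at h
      · rename_i he
        rw [← he]; exact hc
      · exact absurd rfl h
    · simp at h
  · intro n k α β
    rw [Bop_eb, Bop_eb]
    by_cases hβα : β = α
    · subst hβα
      split
      · rw [smul_eb_apply, if_pos rfl, Complex.conj_ofReal]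
      · simp
    · have h1 : (if β.length = n
          then ((b ((β.takeWhile (· = k)).length) k : ℝ) : ℂ) • eb β else 0) α = 0 := by
        split
        · rw [smul_eb_apply, if_neg hβα]
        · simp
      have h2 : (if α.length = n
          then ((b ((α.takeWhile (· = k)).length) k : ℝ) : ℂ) • eb α else 0) β = 0 := by
        split
        · rw [smul_eb_apply, if_neg fun h => hβα h.symm]
        · simp
      rw [h1, h2, map_zero]
  · intro n
    have hA : AcombE (Aop a) n = Matrix.diagonal (fun r =>
        ((a (((List.ofFn fun i => r i.succ).takeWhile (· = r 0)).length + 1) (r 0) : ℝ) : ℂ)) := by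
      funext r c
      rw [AcombE, Aop_eb, if_pos (by simp), smul_eb_apply]
      have hofn : (c 0 :: List.ofFn fun i => c i.succ) = List.ofFn c := (List.ofFn_succ (f := c)).symm
      rw [hofn]
      by_cases hrc : r = c
      · subst hrc
        rw [if_pos rfl, Matrix.diagonal_apply_eq]
      · rw [if_neg (fun h => hrc (List.ofFn_inj.1 h).symm), Matrix.diagonal_apply_ne _ hrc]
    refine ⟨?_, ?_, ?_⟩
    · rw [hA, Matrix.isUnit_iff_isUnit_det, Matrix.det_diagonal, isUnit_iff_ne_zero,
        Finset.prod_ne_zero_iff]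
      intro r _
      exact Complex.ofReal_ne_zero.2 (ne_of_gt (ha _ _))
    · intro r c hrc hne
      exact absurd (by rw [hA, Matrix.diagonal_apply_ne _ hrc]) hne
    · intro r
      rw [hA, Matrix.diagonal_apply_eq]
      exact_mod_cast ha _ _
  · intro k τ
    cases τ with
    | nil => exact recur_nostart a b p hp0 hrec0 k [] rfl
    | cons c t =>
      by_cases hck : c = k
      · subst hck
        exact recur_start a b p hp0 hrec c t
      · exact recur_nostart a b p hp0 hrec0 k (c :: t) (takeWhile_cons_ne k c t hck)
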